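/- Let Γ be a countable index set, v : Γ → ℝ^d a family of vectors, and a_0 ∈ ℝ^d. Assume that for every real T the set {γ ∈ Γ : ⟨a_0, v_γ⟩ ≤ T} is finite and that limsup_{T→∞} (1/T)·log #{γ ∈ Γ : ⟨a_0, v_γ⟩ ≤ T} ≤ 1. Then for every a ∈ ℝ^d with ⟨a_0, a⟩ > 0, the growth indicator satisfies ψ(a) ≤ ⟨a_0, a⟩. -/

import Mathlib

open Filter

attribute [local instance] Classical.propDecidable

/-- An open cone in `ℝ^d`: an open set stable under multiplication by positive
scalars. -/
def IsOpenCone {d : ℕ} (C : Set (EuclideanSpace ℝ (Fin d))) : Prop :=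
  IsOpen C ∧ ∀ x ∈ C, ∀ t : ℝ, 0 < t → t • x ∈ C

/-- `τ_C = limsup_{T→∞} (1/T) log #{γ : v γ ∈ C, ‖v γ‖ ≤ T}`, with
`τ_C = +∞` if one of these sets is infinite. -/
noncomputable def tauCone {ι : Type*} {d : ℕ} (v : ι → EuclideanSpace ℝ (Fin d))
    (C : Set (EuclideanSpace ℝ (Fin d))) : EReal :=
  if ∀ T : ℝ, {γ : ι | v γ ∈ C ∧ ‖v γ‖ ≤ T}.Finite then
    Filter.limsup (fun T : ℝ =>
      ((Real.log ({γ : ι | v γ ∈ C ∧ ‖v γ‖ ≤ T}.ncard) / T : ℝ) : EReal))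
      Filter.atTop
  else ⊤

/-- The growth indicator `ψ(a) = ‖a‖ · inf {τ_C : C an open cone containing a}`. -/
noncomputable def growthIndicator {ι : Type*} {d : ℕ}
    (v : ι → EuclideanSpace ℝ (Fin d)) (a : EuclideanSpace ℝ (Fin d)) : EReal :=
  ((‖a‖ : ℝ) : EReal) *
    sInf { t : EReal | ∃ C : Set (EuclideanSpace ℝ (Fin d)),
      IsOpenCone C ∧ a ∈ C ∧ t = tauCone v C }

private lemma log_nat_mono {m n : ℕ} (h : m ≤ n) : Real.log m ≤ Real.log n := by
  rcases Nat.eq_zero_or_pos m with hm | hm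
  · subst hm
    simp only [Nat.cast_zero, Real.log_zero]
    exact Real.log_natCast_nonneg n
  · exact Real.log_le_log (by exact_mod_cast hm) (by exact_mod_cast h)

/-- If for every `T` the set `{γ : ⟨a₀, v γ⟩ ≤ T}` is finite and
`limsup_{T→∞} (1/T) log #{γ : ⟨a₀, v γ⟩ ≤ T} ≤ 1`, then for every `a` with
`⟨a₀, a⟩ > 0` the growth indicator satisfies `ψ(a) ≤ ⟨a₀, a⟩`. -/
theorem stmt15 {ι : Type*} [Countable ι] (d : ℕ)
    (v : ι → EuclideanSpace ℝ (Fin d)) (a0 : EuclideanSpace ℝ (Fin d))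
    (hfin : ∀ T : ℝ, {γ : ι | (inner ℝ a0 (v γ) : ℝ) ≤ T}.Finite)
    (hlim : Filter.limsup (fun T : ℝ =>
        ((Real.log ({γ : ι | (inner ℝ a0 (v γ) : ℝ) ≤ T}.ncard) / T : ℝ) : EReal))
        Filter.atTop ≤ (1 : EReal))
    (a : EuclideanSpace ℝ (Fin d)) (hpos : (0 : ℝ) < (inner ℝ a0 a : ℝ)) :
    growthIndicator v a ≤ (((inner ℝ a0 a : ℝ) : ℝ) : EReal) := by
  classical
  have ha : a ≠ 0 := by
    rintro rfl
    simp [inner_zero_right] at hpos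
  have hna : (0 : ℝ) < ‖a‖ := norm_pos_iff.mpr ha
  set s : ℝ := (inner ℝ a0 a : ℝ) / ‖a‖ with hs_def
  have hs_pos : 0 < s := div_pos hpos hna
  -- the key estimate on the infimum
  have key : sInf { t : EReal | ∃ C : Set (EuclideanSpace ℝ (Fin d)),
      IsOpenCone C ∧ a ∈ C ∧ t = tauCone v C } ≤ (s : EReal) := by
    apply le_of_forall_gt_imp_ge_of_dense
    intro b hb
    obtain ⟨r, hr1, hr2⟩ := EReal.exists_between_coe_real hb
    have hsr : s < r := by exact_mod_cast hr1
    obtain ⟨c, hc1, hc2⟩ := exists_between hsr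
    have hc_pos : 0 < c := hs_pos.trans hc1
    -- the cone
    set C : Set (EuclideanSpace ℝ (Fin d)) :=
      {x | (inner ℝ a0 x : ℝ) < c * ‖x‖} with hC_def
    have hCopen : IsOpenCone C := by
      constructor
      · exact isOpen_lt (continuous_const.inner continuous_id)
          (continuous_const.mul continuous_norm)
      · intro x hx t ht
        have hx' : (inner ℝ a0 x : ℝ) < c * ‖x‖ := hx
        have : (inner ℝ a0 (t • x) : ℝ) = t * (inner ℝ a0 x : ℝ) :=
          real_inner_smul_right a0 x t
        simp only [hC_def, Set.mem_setOf_eq, this, norm_smul, Real.norm_eq_abs,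
          abs_of_pos ht]
        calc t * (inner ℝ a0 x : ℝ) < t * (c * ‖x‖) := by
              exact mul_lt_mul_of_pos_left hx' ht
          _ = c * (t * ‖x‖) := by ring
    have haC : a ∈ C := by
      have : (inner ℝ a0 a : ℝ) = s * ‖a‖ := by
        rw [hs_def]
        field_simp
      show (inner ℝ a0 a : ℝ) < c * ‖a‖
      rw [this]
      exact mul_lt_mul_of_pos_right hc1 hna
    -- finiteness of the truncated cone sets
    have hCfin : ∀ T : ℝ, {γ : ι | v γ ∈ C ∧ ‖v γ‖ ≤ T}.Finite := by
      intro T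
      apply (hfin (c * |T|)).subset
      rintro γ ⟨h1, h2⟩
      have h1' : (inner ℝ a0 (v γ) : ℝ) < c * ‖v γ‖ := h1
      have : c * ‖v γ‖ ≤ c * |T| :=
        mul_le_mul_of_nonneg_left (h2.trans (le_abs_self T)) hc_pos.le
      exact le_of_lt (h1'.trans_le this)
    have hsubset : ∀ T : ℝ, 0 < T →
        {γ : ι | v γ ∈ C ∧ ‖v γ‖ ≤ T} ⊆ {γ : ι | (inner ℝ a0 (v γ) : ℝ) ≤ c * T} := by
      rintro T hT γ ⟨h1, h2⟩
      have h1' : (inner ℝ a0 (v γ) : ℝ) < c * ‖v γ‖ := h1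
      exact le_of_lt (h1'.trans_le (mul_le_mul_of_nonneg_left h2 hc_pos.le))
    -- bound tauCone v C by r
    have htau : tauCone v C ≤ (r : EReal) := by
      rw [tauCone, if_pos hCfin]
      apply Filter.limsup_le_of_le (by isBoundedDefault)
      · -- eventual bound
        have hrc : (1 : EReal) < ((r / c : ℝ) : EReal) := by
          have : (1 : ℝ) < r / c := (one_lt_div hc_pos).mpr hc2
          exact_mod_cast this
        have hev : ∀ᶠ U : ℝ in atTop,
            ((Real.log ({γ : ι | (inner ℝ a0 (v γ) : ℝ) ≤ U}.ncard) / U : ℝ) : EReal)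
              < ((r / c : ℝ) : EReal) :=
          Filter.eventually_lt_of_limsup_lt (lt_of_le_of_lt hlim hrc)
        have htend : Tendsto (fun T : ℝ => c * T) atTop atTop :=
          (tendsto_id (α := ℝ)).const_mul_atTop hc_pos
        filter_upwards [htend.eventually hev, Filter.eventually_gt_atTop (0 : ℝ)]
          with T hT1 hT2
        have hT1' : Real.log ({γ : ι | (inner ℝ a0 (v γ) : ℝ) ≤ c * T}.ncard) / (c * T)
            < r / c := by exact_mod_cast hT1
        have hcard : ({γ : ι | v γ ∈ C ∧ ‖v γ‖ ≤ T}.ncard : ℝ)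
            ≤ ({γ : ι | (inner ℝ a0 (v γ) : ℝ) ≤ c * T}.ncard : ℝ) := by
          exact_mod_cast Set.ncard_le_ncard (hsubset T hT2) (hfin (c * T))
        have hlog : Real.log ({γ : ι | v γ ∈ C ∧ ‖v γ‖ ≤ T}.ncard)
            ≤ Real.log ({γ : ι | (inner ℝ a0 (v γ) : ℝ) ≤ c * T}.ncard) :=
          log_nat_mono (Set.ncard_le_ncard (hsubset T hT2) (hfin (c * T)))
        have step1 : Real.log ({γ : ι | v γ ∈ C ∧ ‖v γ‖ ≤ T}.ncard) / T
            ≤ Real.log ({γ : ι | (inner ℝ a0 (v γ) : ℝ) ≤ c * T}.ncard) / T := by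
          gcongr
        have step2 : Real.log ({γ : ι | (inner ℝ a0 (v γ) : ℝ) ≤ c * T}.ncard) / T
            = c * (Real.log ({γ : ι | (inner ℝ a0 (v γ) : ℝ) ≤ c * T}.ncard) / (c * T)) := by
          field_simp
        have step3 : c * (Real.log ({γ : ι | (inner ℝ a0 (v γ) : ℝ) ≤ c * T}.ncard) / (c * T))
            < c * (r / c) := mul_lt_mul_of_pos_left hT1' hc_pos
        have hfinal : Real.log ({γ : ι | v γ ∈ C ∧ ‖v γ‖ ≤ T}.ncard) / T ≤ r := by
          have : c * (r / c) = r := by field_simp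
          linarith [step1, step2 ▸ step3]
        exact_mod_cast hfinal
    calc sInf { t : EReal | ∃ C : Set (EuclideanSpace ℝ (Fin d)),
          IsOpenCone C ∧ a ∈ C ∧ t = tauCone v C } ≤ tauCone v C :=
          csInf_le (OrderBot.bddBelow _) ⟨C, hCopen, haC, rfl⟩
      _ ≤ (r : EReal) := htau
      _ ≤ b := hr2.le
  -- conclude
  rw [growthIndicator]
  have : (((inner ℝ a0 a : ℝ) : ℝ) : EReal) = ((‖a‖ : ℝ) : EReal) * (s : EReal) := by
    rw [← EReal.coe_mul]
    norm_cast
    rw [hs_def]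
    field_simp
  rw [this, mul_comm ((‖a‖ : ℝ) : EReal) _, mul_comm ((‖a‖ : ℝ) : EReal) _]
  exact mul_le_mul_of_nonneg_right key (by exact_mod_cast hna.le)
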